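/- (Abbott–Hanson) For odd n ≥ 3, m(n) ≤ 2^{n-1} + n · m(n-2). -/

import Mathlib

/-- A family of finsets is `n`-uniform if every hyperedge has `n` elements. -/
def IsUniform (n : ℕ) (E : Finset (Finset ℕ)) : Prop := ∀ e ∈ E, e.card = n

/-- A hypergraph (family of hyperedges) is 2-colorable if there is a Red/Blue
coloring of the vertices such that no hyperedge is monochromatic. -/
def Colorable2 (E : Finset (Finset ℕ)) : Prop :=
  ∃ χ : ℕ → Bool, ∀ e ∈ E, (∃ v ∈ e, χ v = true) ∧ (∃ v ∈ e, χ v = false)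

/-- `m n` is the least number of hyperedges in a non-2-colorable `n`-uniform hypergraph. -/
noncomputable def m (n : ℕ) : ℕ :=
  sInf {k | ∃ E : Finset (Finset ℕ), IsUniform n E ∧ ¬ Colorable2 E ∧ E.card = k}

/-- A hyperedge is monochromatic under `χ` if all its vertices get the same color. -/
def Mono (χ : ℕ → Bool) (s : Finset ℕ) : Prop :=
  (∀ x ∈ s, χ x = true) ∨ (∀ x ∈ s, χ x = false)

lemma bool_eq_of_ne {a b : Bool} (h : a ≠ b) : a = !b := by
  cases a <;> cases b <;> simp_all

/-- The complete `k`-uniform hypergraph on `2k-1` vertices is not 2-colorable. -/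
lemma complete_exists (k : ℕ) (hk : 1 ≤ k) :
    ∃ E : Finset (Finset ℕ), IsUniform k E ∧ ¬ Colorable2 E := by
  classical
  refine ⟨Finset.powersetCard k (Finset.range (2*k-1)), fun e he =>
    (Finset.mem_powersetCard.mp he).2, ?_⟩
  rintro ⟨χ, hχ⟩
  by_cases hcard : k ≤ ((Finset.range (2*k-1)).filter (fun x => χ x = true)).card
  · obtain ⟨s, hsR, hs⟩ := Finset.exists_subset_card_eq hcard
    have hsE : s ∈ Finset.powersetCard k (Finset.range (2*k-1)) :=
      Finset.mem_powersetCard.mpr ⟨hsR.trans (Finset.filter_subset _ _), hs⟩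
    obtain ⟨-, x, hx, hxf⟩ := hχ s hsE
    have := (Finset.mem_filter.mp (hsR hx)).2
    simp [this] at hxf
  · have hsum := Finset.card_filter_add_card_filter_not
      (s := Finset.range (2*k-1)) (p := fun x => χ x = true)
    rw [Finset.card_range] at hsum
    have hF : k ≤ ((Finset.range (2*k-1)).filter (fun x => ¬ χ x = true)).card := by
      omega
    obtain ⟨s, hsF, hs⟩ := Finset.exists_subset_card_eq hF
    have hsE : s ∈ Finset.powersetCard k (Finset.range (2*k-1)) :=
      Finset.mem_powersetCard.mpr ⟨hsF.trans (Finset.filter_subset _ _), hs⟩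
    obtain ⟨⟨x, hx, hxt⟩, -⟩ := hχ s hsE
    exact (Finset.mem_filter.mp (hsF hx)).2 hxt

/-- There are at most `2^(n-1)` subsets of `range n` of odd cardinality. -/
lemma odd_subsets_le (n : ℕ) (hn : 1 ≤ n) :
    (((Finset.range n).powerset).filter (fun S => Odd S.card)).card ≤ 2 ^ (n - 1) := by
  classical
  set P := (Finset.range n).powerset with hP
  set O := P.filter (fun S => Odd S.card) with hO
  set Ev := P.filter (fun S => ¬ Odd S.card) with hEv
  have hOE : O.card ≤ Ev.card := by
    apply Finset.card_le_card_of_injOn (fun S => if 0 ∈ S then S.erase 0 else insert 0 S)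
    · intro S hS
      obtain ⟨hSP, hSo⟩ := Finset.mem_filter.mp hS
      have hSsub := Finset.mem_powerset.mp hSP
      rw [Nat.odd_iff] at hSo
      by_cases h0 : 0 ∈ S <;> simp only [h0, if_true, if_false]
      · refine Finset.mem_filter.mpr ⟨Finset.mem_powerset.mpr
          ((Finset.erase_subset _ _).trans hSsub), ?_⟩
        rw [Finset.card_erase_of_mem h0, Nat.odd_iff]
        have hpos : 1 ≤ S.card := Finset.card_pos.mpr ⟨0, h0⟩
        omega
      · refine Finset.mem_filter.mpr ⟨Finset.mem_powerset.mpr ?_, ?_⟩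
        · intro x hx
          rcases Finset.mem_insert.mp hx with rfl | hx
          · exact Finset.mem_range.mpr (by omega)
          · exact hSsub hx
        · rw [Finset.card_insert_of_notMem h0, Nat.odd_iff]
          omega
    · intro S1 h1 S2 h2 heq
      simp only at heq
      by_cases ha : 0 ∈ S1 <;> by_cases hb : 0 ∈ S2 <;>
        simp only [ha, hb, if_true, if_false] at heq
      · rw [← Finset.insert_erase ha, ← Finset.insert_erase hb, heq]
      · exact absurd (heq ▸ Finset.mem_insert_self 0 S2)
          (Finset.notMem_erase 0 S1)
      · exact absurd (heq.symm ▸ Finset.mem_insert_self 0 S1)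
          (Finset.notMem_erase 0 S2)
      · have := congrArg (Finset.erase · 0) heq
        simpa [Finset.erase_insert ha, Finset.erase_insert hb] using this
  have hsum : O.card + Ev.card = 2 ^ n := by
    rw [hO, hEv, Finset.card_filter_add_card_filter_not, hP,
      Finset.card_powerset, Finset.card_range]
  have hpow : 2 ^ n = 2 * 2 ^ (n - 1) := by
    rw [← pow_succ']
    congr 1
    omega
  omega

/-- Abbott–Hanson: for odd `n ≥ 3`, `m n ≤ 2 ^ (n - 1) + n * m (n - 2)`. -/
theorem abbott_hanson_recurrence (n : ℕ) (hn : 3 ≤ n) (hodd : Odd n) :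
    m n ≤ 2 ^ (n - 1) + n * m (n - 2) := by
  classical
  have hnodd : n % 2 = 1 := Nat.odd_iff.mp hodd
  have hne : {k | ∃ E : Finset (Finset ℕ),
      IsUniform (n-2) E ∧ ¬ Colorable2 E ∧ E.card = k}.Nonempty := by
    obtain ⟨E, hU, hNC⟩ := complete_exists (n-2) (by omega)
    exact ⟨E.card, E, hU, hNC, rfl⟩
  obtain ⟨C, hCU, hCNC, hCcard⟩ := Nat.sInf_mem hne
  set B : ℕ := (C.sup fun e => e.sup id) + 1 with hB
  have hBbound : ∀ e ∈ C, ∀ x ∈ e, x < B := by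
    intro e he x hx
    have h1 : e.sup id ≤ C.sup (fun e => e.sup id) := Finset.le_sup he
    have h2 : x ≤ e.sup id := Finset.le_sup (f := id) hx
    omega
  set u : ℕ → ℕ := fun i => B + i with hu
  set v : ℕ → ℕ := fun i => B + n + i with hv
  set EA : Finset (Finset ℕ) :=
    (Finset.range n ×ˢ C).image (fun p => insert (u p.1) (insert (v p.1) p.2)) with hEA
  set EB : Finset (Finset ℕ) :=
    (((Finset.range n).powerset).filter (fun S => Odd S.card)).image
      (fun S => S.image u ∪ (Finset.range n \ S).image v) with hEB
  set E := EA ∪ EB with hE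
  -- uniformity
  have hUnif : IsUniform n E := by
    intro f hf
    rcases Finset.mem_union.mp hf with h | h
    · obtain ⟨⟨i, e⟩, hp, rfl⟩ := Finset.mem_image.mp h
      obtain ⟨hi, he⟩ := Finset.mem_product.mp hp
      have hvne : v i ∉ e := by
        intro hmem
        have := hBbound e he _ hmem
        simp only [hv] at this
        omega
      have hune : u i ∉ insert (v i) e := by
        rw [Finset.mem_insert]
        push_neg
        refine ⟨by simp only [hu, hv]; omega, ?_⟩
        intro hmem
        have := hBbound e he _ hmem
        simp only [hu] at this
        omega
      rw [Finset.card_insert_of_notMem hune, Finset.card_insert_of_notMem hvne, hCU e he]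
      omega
    · obtain ⟨S, hS, rfl⟩ := Finset.mem_image.mp h
      obtain ⟨hSp, -⟩ := Finset.mem_filter.mp hS
      have hSsub := Finset.mem_powerset.mp hSp
      have hdisj : Disjoint (S.image u) ((Finset.range n \ S).image v) := by
        rw [Finset.disjoint_left]
        intro a ha hb
        obtain ⟨i, hi, rfl⟩ := Finset.mem_image.mp ha
        obtain ⟨j, hj, hji⟩ := Finset.mem_image.mp hb
        have hilt : i < n := Finset.mem_range.mp (hSsub hi)
        simp only [hu, hv] at hji
        omega
      rw [Finset.card_union_of_disjoint hdisj,
        Finset.card_image_of_injective _ (fun a b hab => by simpa [hu] using hab),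
        Finset.card_image_of_injective _ (fun a b hab => by simpa [hv] using hab),
        Finset.card_sdiff_of_subset hSsub, Finset.card_range]
      have hle := Finset.card_le_card hSsub
      rw [Finset.card_range] at hle
      omega
  -- non-2-colorability
  have hNC : ¬ Colorable2 E := by
    rintro ⟨χ, hχ⟩
    have hmonoC : ∃ e ∈ C, ∃ c : Bool, ∀ x ∈ e, χ x = c := by
      by_contra hcon
      push_neg at hcon
      apply hCNC
      refine ⟨χ, fun e he => ?_⟩
      obtain ⟨x, hx, hxc⟩ := hcon e he false
      obtain ⟨y, hy, hyc⟩ := hcon e he true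
      exact ⟨⟨x, hx, by simpa using bool_eq_of_ne hxc⟩,
        ⟨y, hy, by simpa using bool_eq_of_ne hyc⟩⟩
    obtain ⟨e, heC, c, hmono⟩ := hmonoC
    have hAedge : ∀ i ∈ Finset.range n, insert (u i) (insert (v i) e) ∈ E := fun i hi =>
      Finset.mem_union_left _
        (Finset.mem_image.mpr ⟨(i, e), Finset.mem_product.mpr ⟨hi, heC⟩, rfl⟩)
    have h1 : ∀ i ∈ Finset.range n, χ (u i) = !c ∨ χ (v i) = !c := by
      intro i hi
      obtain ⟨⟨x, hx, hxt⟩, ⟨y, hy, hyf⟩⟩ := hχ _ (hAedge i hi)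
      have hz : ∃ z ∈ insert (u i) (insert (v i) e), χ z = !c := by
        cases c
        · exact ⟨x, hx, by simpa using hxt⟩
        · exact ⟨y, hy, by simpa using hyf⟩
      obtain ⟨z, hz, hzc⟩ := hz
      have hzne : z ∉ e := by
        intro hmem
        rw [hmono z hmem] at hzc
        simp at hzc
      rcases Finset.mem_insert.mp hz with h | h
      · left; rw [← h]; exact hzc
      · rcases Finset.mem_insert.mp h with h' | h'
        · right; rw [← h']; exact hzc
        · exact absurd h' hzne
    have hKey : ∀ S ⊆ Finset.range n, Odd S.card → ∀ d : Bool,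
        (∀ i ∈ S, χ (u i) = d) → (∀ i ∈ Finset.range n \ S, χ (v i) = d) → False := by
      intro S hS hSodd d hu' hv'
      have hmem : S.image u ∪ (Finset.range n \ S).image v ∈ E :=
        Finset.mem_union_right _ (Finset.mem_image.mpr
          ⟨S, Finset.mem_filter.mpr ⟨Finset.mem_powerset.mpr hS, hSodd⟩, rfl⟩)
      obtain ⟨⟨x, hx, hxt⟩, ⟨y, hy, hyf⟩⟩ := hχ _ hmem
      have hall : ∀ z ∈ S.image u ∪ (Finset.range n \ S).image v, χ z = d := by
        intro z hz
        rcases Finset.mem_union.mp hz with h | h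
        · obtain ⟨i, hi, rfl⟩ := Finset.mem_image.mp h
          exact hu' i hi
        · obtain ⟨i, hi, rfl⟩ := Finset.mem_image.mp h
          exact hv' i hi
      have hxx := hall x hx
      have hyy := hall y hy
      cases d
      · rw [hxx] at hxt; exact Bool.false_ne_true hxt
      · rw [hyy] at hyf; simp at hyf
    set S₀ := (Finset.range n).filter (fun i => χ (u i) = !c) with hS₀
    have hS₀sub : S₀ ⊆ Finset.range n := Finset.filter_subset _ _
    have huc : ∀ i ∈ Finset.range n, i ∉ S₀ → χ (v i) = !c := by
      intro i hi hni
      rcases h1 i hi with h | h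
      · exact absurd (Finset.mem_filter.mpr ⟨hi, h⟩) hni
      · exact h
    by_cases hpar : Odd S₀.card
    · exact hKey S₀ hS₀sub hpar (!c) (fun i hi => (Finset.mem_filter.mp hi).2)
        (fun i hi => huc i (Finset.mem_sdiff.mp hi).1 (Finset.mem_sdiff.mp hi).2)
    · by_cases hex : ∃ i ∈ Finset.range n, χ (u i) = !c ∧ χ (v i) = !c
      · obtain ⟨i, hi, hui, hvi⟩ := hex
        have hiS : i ∈ S₀ := Finset.mem_filter.mpr ⟨hi, hui⟩
        have hodd' : Odd (S₀.erase i).card := by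
          rw [Finset.card_erase_of_mem hiS]
          have hpos : 1 ≤ S₀.card := Finset.card_pos.mpr ⟨i, hiS⟩
          rw [Nat.odd_iff] at hpar ⊢
          omega
        refine hKey (S₀.erase i) ((Finset.erase_subset _ _).trans hS₀sub) hodd' (!c)
          (fun j hj => (Finset.mem_filter.mp (Finset.mem_of_mem_erase hj)).2)
          (fun j hj => ?_)
        obtain ⟨hjn, hjne⟩ := Finset.mem_sdiff.mp hj
        by_cases hji : j = i
        · subst hji; exact hvi
        · exact huc j hjn (fun hjS => hjne (Finset.mem_erase.mpr ⟨hji, hjS⟩))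
      · push_neg at hex
        have hodd' : Odd ((Finset.range n \ S₀)).card := by
          rw [Finset.card_sdiff_of_subset hS₀sub, Finset.card_range]
          have hle := Finset.card_le_card hS₀sub
          rw [Finset.card_range] at hle
          rw [Nat.odd_iff] at hpar ⊢
          omega
        refine hKey (Finset.range n \ S₀) Finset.sdiff_subset hodd' c
          (fun i hi => ?_) (fun i hi => ?_)
        · obtain ⟨hin, hni⟩ := Finset.mem_sdiff.mp hi
          have hne' : χ (u i) ≠ !c := fun h => hni (Finset.mem_filter.mpr ⟨hin, h⟩)
          simpa using bool_eq_of_ne hne'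
        · obtain ⟨hin, h2⟩ := Finset.mem_sdiff.mp hi
          have hiS : i ∈ S₀ := by
            by_contra hc
            exact h2 (Finset.mem_sdiff.mpr ⟨hin, hc⟩)
          have hui := (Finset.mem_filter.mp hiS).2
          have hne' := hex i hin hui
          simpa using bool_eq_of_ne hne'
  -- the cardinality bound
  have hle : m n ≤ E.card := Nat.sInf_le ⟨E, hUnif, hNC, rfl⟩
  have hA : EA.card ≤ n * m (n - 2) := by
    calc EA.card ≤ (Finset.range n ×ˢ C).card := Finset.card_image_le
      _ = n * m (n - 2) := by rw [Finset.card_product, Finset.card_range, hCcard]; rfl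
  have hBc : EB.card ≤ 2 ^ (n - 1) :=
    le_trans Finset.card_image_le (odd_subsets_le n (by omega))
  have hEcard : E.card ≤ EA.card + EB.card := Finset.card_union_le _ _
  omega
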